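/- For any a, b in the free Lie algebra L ⊂ ℝ⟨x,y⟩, the element ∂_x^{tr}(tr(ab)) = μ_flip(∂_x(ab)) lies in L, where μ_flip(c⊗d) = d·c. Consequently, the cyclic partial derivative of any element of F(L) with respect to x is a Lie element. -/

import Mathlib

noncomputable section
open TensorProduct

abbrev A : Type := FreeAlgebra ℝ (Fin 2)
abbrev B : Type := A ⊗[ℝ] A

def X : A := FreeAlgebra.ι ℝ 0
def Y : A := FreeAlgebra.ι ℝ 1

/-- Generator matrices used to define the noncommutative partial derivative `pd d`. -/
def genMat (d i : Fin 2) : Matrix (Fin 2) (Fin 2) B :=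
  !![(Algebra.TensorProduct.includeLeft : A →ₐ[ℝ] B) (FreeAlgebra.ι ℝ i), if i = d then 1 else 0;
     0, Algebra.TensorProduct.includeRight (FreeAlgebra.ι ℝ i)]

def Φmat (d : Fin 2) : A →ₐ[ℝ] Matrix (Fin 2) (Fin 2) B :=
  FreeAlgebra.lift ℝ (genMat d)

/-- The noncommutative partial derivative `∂_x` (for `d = 0`) resp. `∂_y` (for `d = 1`):
on a monomial it splits the word at each occurrence of the letter `d`. -/
def pd (d : Fin 2) (a : A) : B := Φmat d a 0 1

/-- The subspace `[A,A]` spanned by commutators; `tr(A) = A/[A,A]` is the trace space. -/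
def commSub : Submodule ℝ A := Submodule.span ℝ {p : A | ∃ a b : A, p = a * b - b * a}

/-- The trace projection `tr : A → A/[A,A]`. -/
def trc (a : A) : A ⧸ commSub := Submodule.Quotient.mk a

/-- Reversed multiplication `μ_flip : A ⊗ A → A`, `b ⊗ c ↦ c·b`. -/
def flipMul : B →ₗ[ℝ] A :=
  (LinearMap.mul' ℝ A).comp (TensorProduct.comm ℝ A A).toLinearMap

attribute [local instance 100] LieRing.ofAssociativeRing

/-- The free Lie algebra `L ⊂ A`: the smallest Lie subalgebra of `A` (with bracket
`[a,b] = ab − ba`) containing `x` and `y`. -/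
def L : LieSubalgebra ℝ A := LieSubalgebra.lieSpan ℝ A {X, Y}

local notation "incL" => (Algebra.TensorProduct.includeLeft : A →ₐ[ℝ] B)
local notation "incR" => (Algebra.TensorProduct.includeRight : A →ₐ[ℝ] B)

lemma tri (a : A) : Φmat 0 a 1 0 = 0 ∧ Φmat 0 a 0 0 = incL a ∧ Φmat 0 a 1 1 = incR a := by
  induction a using FreeAlgebra.induction with
  | grade0 r =>
      refine ⟨?_, ?_, ?_⟩ <;>
        simp [Φmat, Matrix.algebraMap_matrix_apply, Algebra.algebraMap_eq_smul_one,
          Algebra.TensorProduct.one_def]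
  | grade1 i =>
      refine ⟨?_, ?_, ?_⟩ <;> simp [Φmat, genMat]
  | mul a b ha hb =>
      obtain ⟨ha0, ha1, ha2⟩ := ha
      obtain ⟨hb0, hb1, hb2⟩ := hb
      refine ⟨?_, ?_, ?_⟩ <;>
        simp [map_mul, Matrix.mul_apply, Fin.sum_univ_two, ha0, ha1, ha2, hb0, hb1, hb2]
  | add a b ha hb =>
      obtain ⟨ha0, ha1, ha2⟩ := ha
      obtain ⟨hb0, hb1, hb2⟩ := hb
      refine ⟨?_, ?_, ?_⟩ <;> simp [map_add, Matrix.add_apply, ha0, ha1, ha2, hb0, hb1, hb2]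

lemma pd_mul (a b : A) : pd 0 (a * b) = incL a * pd 0 b + pd 0 a * incR b := by
  have ha := tri a
  have hb := tri b
  unfold pd
  rw [map_mul, Matrix.mul_apply, Fin.sum_univ_two, ha.2.1, hb.2.2]

lemma pd_X : pd 0 X = 1 := by
  simp [pd, Φmat, X, genMat]

lemma pd_Y : pd 0 Y = 0 := by
  simp [pd, Φmat, Y, genMat]

lemma pd_sub (a b : A) : pd 0 (a - b) = pd 0 a - pd 0 b := by
  simp [pd, map_sub, Matrix.sub_apply]

lemma pd_add (a b : A) : pd 0 (a + b) = pd 0 a + pd 0 b := by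
  simp [pd, map_add, Matrix.add_apply]

lemma pd_smul (r : ℝ) (a : A) : pd 0 (r • a) = r • pd 0 a := by
  simp [pd, map_smul, Matrix.smul_apply]

lemma flipMul_tmul (u v : A) : flipMul (u ⊗ₜ[ℝ] v) = v * u := by
  simp [flipMul]

lemma flip_incL (a : A) (t : B) : flipMul (incL a * t) = flipMul (t * incR a) := by
  induction t using TensorProduct.induction_on with
  | zero => simp
  | tmul u v =>
      simp [Algebra.TensorProduct.includeLeft_apply, Algebra.TensorProduct.includeRight_apply,
        Algebra.TensorProduct.tmul_mul_tmul, flipMul_tmul, mul_assoc]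
  | add s t hs ht => rw [mul_add, add_mul, map_add, map_add, hs, ht]

lemma flip_incR_left (b : A) (t : B) : flipMul (incR b * t) = b * flipMul t := by
  induction t using TensorProduct.induction_on with
  | zero => simp
  | tmul u v =>
      simp [Algebra.TensorProduct.includeRight_apply,
        Algebra.TensorProduct.tmul_mul_tmul, flipMul_tmul, mul_assoc]
  | add s t hs ht => rw [mul_add, map_add, hs, ht, map_add, mul_add]

/-- The bilinear quantity `H a c = flipMul (pd 0 a * (1 ⊗ c))`. -/
def Hq (a c : A) : A := flipMul (pd 0 a * incR c)

lemma Hq_bracket (b c d : A) :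
    Hq (b * c - c * b) d = Hq b (c * d - d * c) + Hq c (d * b - b * d) := by
  have key : ∀ u v w : A, flipMul (incL u * pd 0 v * incR w) = Hq v (w * u) := by
    intro u v w
    rw [mul_assoc, flip_incL]
    unfold Hq
    rw [mul_assoc, ← map_mul]
  unfold Hq
  rw [pd_sub, pd_mul, pd_mul]
  simp only [sub_mul, add_mul, map_sub, map_add]
  have h1 := key b c d
  have h2 := key c b d
  rw [mul_assoc (pd 0 b), ← map_mul, mul_assoc (pd 0 c), ← map_mul]
  unfold Hq at *
  rw [h1, h2, mul_sub, mul_sub, map_sub, map_sub]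
  abel

lemma Hq_mem (a : A) (ha : a ∈ L) : ∀ c : A, c ∈ L → Hq a c ∈ L := by
  refine LieSubalgebra.lieSpan_induction (R := ℝ) (p := fun x _ => x ∈ L ∧ ∀ c : A, c ∈ L → Hq x c ∈ L)
    ?_ ?_ ?_ ?_ ?_ ha |>.2
  · rintro x (rfl | rfl)
    · refine ⟨LieSubalgebra.subset_lieSpan (by simp), fun c hc => ?_⟩
      have : Hq X c = c := by
        unfold Hq
        rw [pd_X, one_mul]
        simp [Algebra.TensorProduct.includeRight_apply, flipMul_tmul]
      rwa [this]
    · refine ⟨LieSubalgebra.subset_lieSpan (by simp), fun c hc => ?_⟩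
      have : Hq Y c = 0 := by
        unfold Hq
        rw [pd_Y, zero_mul, map_zero]
      rw [this]; exact L.zero_mem'
  · exact ⟨L.zero_mem', fun c hc => by
      have : Hq 0 c = 0 := by
        unfold Hq
        have : pd 0 (0 : A) = 0 := by simp [pd]
        rw [this, zero_mul, map_zero]
      rw [this]; exact L.zero_mem'⟩
  swap
  · rintro r x _ ⟨hx, hH⟩
    refine ⟨L.smul_mem' r hx, fun c hc => ?_⟩
    have : Hq (r • x) c = r • Hq x c := by
      unfold Hq; rw [pd_smul, smul_mul_assoc, map_smul]
    rw [this]; exact L.smul_mem' r (hH c hc)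
  · rintro x y _ _ ⟨hx, hHx⟩ ⟨hy, hHy⟩
    refine ⟨L.add_mem' hx hy, fun c hc => ?_⟩
    have : Hq (x + y) c = Hq x c + Hq y c := by
      unfold Hq; rw [pd_add, add_mul, map_add]
    rw [this]; exact L.add_mem' (hHx c hc) (hHy c hc)
  · rintro x y _ _ ⟨hx, hHx⟩ ⟨hy, hHy⟩
    refine ⟨L.lie_mem' hx hy, fun c hc => ?_⟩
    have hb : ⁅x, y⁆ = x * y - y * x := rfl
    rw [hb, Hq_bracket]
    have m1 : c * x - x * c ∈ L := L.lie_mem' hc hx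
    have m2 : c * y - y * c ∈ L := L.lie_mem' hc hy
    exact L.add_mem' (hHx _ (by have := L.lie_mem' hy hc; exact this))
      (hHy _ (by have := L.lie_mem' hc hx; exact this))


/-- For Lie elements `a, b ∈ L`, the cyclic partial derivative
`∂_x^{tr}(tr(ab)) = μ_flip(∂_x(ab))` is again a Lie element. -/
theorem cyclic_derivative_of_lie_in_L (a b : A) (ha : a ∈ L) (hb : b ∈ L) :
    flipMul (pd 0 (a * b)) ∈ L := by
  rw [pd_mul, map_add, flip_incL]
  have h1 : flipMul (pd 0 b * incR a) = Hq b a := rfl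
  have h2 : flipMul (pd 0 a * incR b) = Hq a b := rfl
  rw [h1, h2]
  exact L.add_mem' (Hq_mem b hb a ha) (Hq_mem a ha b hb)
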